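/- If V = U ⊕ W is a decomposition into φ-invariant subspaces such that every vector of U is annihilated by some power of φ and φ restricted to W is an isomorphism, then the localization map φ̇: V → V_x admits a k[x]-module section. -/

import Mathlib

open Polynomial

theorem stmt_8 (k : Type*) [Field k] (V : Type*) [AddCommGroup V] [Module k V]
    [Module (Polynomial k) V] [IsScalarTower k (Polynomial k) V]
    (φ : V →ₗ[k] V) (hφ : ∀ v : V, (X : Polynomial k) • v = φ v)
    (U W : Submodule k V) (hUW : IsCompl U W)
    (hUinv : ∀ u ∈ U, φ u ∈ U) (hWinv : ∀ w ∈ W, φ w ∈ W)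
    (hUnil : ∀ u ∈ U, ∃ n : ℕ, (φ ^ n) u = 0)
    (hWiso : Set.BijOn φ (W : Set V) (W : Set V)) :
    ∃ σ : LocalizedModule (Submonoid.powers (X : Polynomial k)) V →ₗ[Polynomial k] V,
      (LocalizedModule.mkLinearMap (Submonoid.powers (X : Polynomial k)) V) ∘ₗ σ
        = LinearMap.id := by
  have hC : ∀ (a : k) (v : V), (C a : Polynomial k) • v = a • v := by
    intro a v
    rw [← Polynomial.algebraMap_eq, algebraMap_smul]
  have hXpow : ∀ (n : ℕ) (v : V), ((X : Polynomial k) ^ n) • v = (φ ^ n) v := by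
    intro n
    induction n with
    | zero => intro v; simp
    | succ n ih =>
      intro v
      rw [pow_succ, mul_smul, hφ, pow_succ']
      rw [ih (φ v), ← Module.End.mul_apply]
      rw [pow_mul_comm']
  -- W is stable under all polynomials
  have hWstab : ∀ (p : Polynomial k), ∀ w ∈ W, p • w ∈ W := by
    intro p
    induction p using Polynomial.induction_on with
    | C a => intro w hw; rw [hC]; exact W.smul_mem a hw
    | add p q hp hq => intro w hw; rw [add_smul]; exact W.add_mem (hp w hw) (hq w hw)
    | monomial n a ih =>
      intro w hw
      have e : (C a * X ^ (n + 1) : Polynomial k) = X * (C a * X ^ n) := by ring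
      rw [e, mul_smul, hφ]
      exact hWinv _ (ih w hw)
  -- W as a k[X]-submodule
  set W' : Submodule (Polynomial k) V :=
    { carrier := W
      add_mem' := fun ha hb => W.add_mem ha hb
      zero_mem' := W.zero_mem
      smul_mem' := fun p v hv => hWstab p v hv } with hW'
  -- the k-linear projection onto W along U
  set π : V →ₗ[k] W := W.projectionOnto U hUW.symm with hπ
  have hπW : ∀ w ∈ W, (π w : V) = w := by
    intro w hw
    have := Submodule.projectionOnto_apply_left hUW.symm ⟨w, hw⟩
    rw [hπ]
    exact congrArg Subtype.val this
  have hπU : ∀ u ∈ U, (π u : V) = 0 := by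
    intro u hu
    rw [hπ, (Submodule.projectionOnto_apply_eq_zero_iff hUW.symm).mpr hu]
    rfl
  have hsub : ∀ v : V, v - (π v : V) ∈ U := by
    intro v
    have h := Submodule.projection_add_projection_eq_self hUW.symm v
    have h2 : v - (W.projectionOnto U hUW.symm v : V)
        = (U.projectionOnto W hUW.symm.symm v : V) := sub_eq_of_eq_add' h.symm
    rw [hπ, h2]
    exact (U.projectionOnto W hUW.symm.symm v).2
  -- π commutes with X
  have hπX : ∀ v : V, (π ((X : Polynomial k) • v) : V) = (X : Polynomial k) • (π v : V) := by
    intro v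
    have h1 : (X : Polynomial k) • v - (X : Polynomial k) • (π v : V) ∈ U := by
      rw [← smul_sub, hφ]
      exact hUinv _ (hsub v)
    have h2 : (X : Polynomial k) • (π v : V) ∈ W := by
      rw [hφ]; exact hWinv _ (π v).2
    have : (X : Polynomial k) • v =
        ((X : Polynomial k) • v - (X : Polynomial k) • (π v : V)) +
          (X : Polynomial k) • (π v : V) := by abel
    rw [this, map_add, Submodule.coe_add, hπU _ h1, zero_add]
    exact hπW _ h2
  -- π is k[X]-linear (into V)
  have hπpoly : ∀ (p : Polynomial k) (v : V), (π (p • v) : V) = p • (π v : V) := by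
    intro p
    induction p using Polynomial.induction_on with
    | C a => intro v; rw [hC, hC, map_smul]; rfl
    | add p q hp hq => intro v; rw [add_smul, map_add, add_smul, ← hp, ← hq]; rfl
    | monomial n a ih =>
      intro v
      have e : (C a * X ^ (n + 1) : Polynomial k) = X * (C a * X ^ n) := by ring
      rw [e, mul_smul, hπX, ih, ← mul_smul]
  -- the projection as k[X]-linear map into W'
  set g : V →ₗ[Polynomial k] W' :=
    { toFun := fun v => ⟨(π v : V), (π v).2⟩
      map_add' := fun a b => by ext; simp
      map_smul' := fun p v => by ext; exact hπpoly p v } with hg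
  -- X acts invertibly on W'
  have hunit : ∀ s : Submonoid.powers (X : Polynomial k),
      IsUnit (algebraMap (Polynomial k) (Module.End (Polynomial k) W') s) := by
    have hXunit : IsUnit (algebraMap (Polynomial k) (Module.End (Polynomial k) W')
        (X : Polynomial k)) := by
      rw [Module.End.isUnit_iff]
      constructor
      · intro a b hab
        have : (X : Polynomial k) • (a : V) = (X : Polynomial k) • (b : V) := by
          have := congrArg (Subtype.val) hab
          simpa using this
        rw [hφ, hφ] at this
        exact Subtype.ext (hWiso.injOn a.2 b.2 this)
      · intro b
        obtain ⟨a, ha, hab⟩ := hWiso.surjOn b.2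
        refine ⟨⟨a, ha⟩, ?_⟩
        apply Subtype.ext
        show (X : Polynomial k) • a = (b : V)
        rw [hφ]; exact hab
    rintro ⟨s, n, rfl⟩
    simpa [map_pow] using hXunit.pow n
  -- the section
  refine ⟨W'.subtype ∘ₗ LocalizedModule.lift _ g hunit, ?_⟩
  ext z
  induction z using LocalizedModule.induction_on with
  | _ v s =>
    simp only [LinearMap.comp_apply, LinearMap.id_apply, LocalizedModule.lift_mk,
      Submodule.subtype_apply, LocalizedModule.mkLinearMap_apply]
    set w : W' := (hunit s).unit⁻¹.val (g v) with hw
    have hsw : g v = (s : Polynomial k) • w :=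
      (Module.End.algebraMap_isUnit_inv_apply_eq_iff _ (hunit s) _ _).mp rfl
    rw [LocalizedModule.mk_eq]
    obtain ⟨N, hN⟩ := hUnil _ (hsub v)
    refine ⟨⟨(X : Polynomial k) ^ N, N, rfl⟩, ?_⟩
    have hswV : (π v : V) = (s : Polynomial k) • (w : V) := congrArg Subtype.val hsw
    show ((X : Polynomial k) ^ N) • (s : Polynomial k) • (w : V) =
      ((X : Polynomial k) ^ N) • (1 : Polynomial k) • v
    rw [← hswV, one_smul]
    have h0 : ((X : Polynomial k) ^ N) • (v - (π v : V)) = 0 := by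
      rw [hXpow]; exact hN
    rw [smul_sub, sub_eq_zero] at h0
    exact h0.symm
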